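/- Let N ≥ 3 and fix R > 0. Then lim_{λ → 0⁺} λ^{-(N−2)/4} · (∫_{|x| ≤ R√λ} (f'(W_λ(x)))^{2N/(N+2)} dx)^{(N+2)/(2N)} = 0, where f'(u) = ((N+2)/(N−2))|u|^{4/(N−2)}. -/

import Mathlib

open MeasureTheory Real Filter

open Metric Set in
/-- geometric-annuli bound for integrals of functions dominated by `M‖x‖^{-s}` on a ball. -/
lemma ball_rpow_bound (N : ℕ) (hN : 3 ≤ N) {s ρ M : ℝ} (hs0 : 0 < s) (hsN : s < N)
    (hρ : 0 < ρ) (hM : 0 ≤ M) (g : EuclideanSpace ℝ (Fin N) → ℝ)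
    (hg0 : ∀ x, 0 ≤ g x) (hgc : Continuous g)
    (hb : ∀ x : EuclideanSpace ℝ (Fin N), x ≠ 0 → g x ≤ M * ‖x‖ ^ (-s)) :
    ∫ x in Metric.closedBall (0 : EuclideanSpace ℝ (Fin N)) ρ, g x ≤
      M * ((2:ℝ) ^ s * (1 - (2:ℝ) ^ (s - N))⁻¹ *
        (volume (Metric.closedBall (0 : EuclideanSpace ℝ (Fin N)) 1)).toReal) * ρ ^ ((N:ℝ) - s) := by
  haveI : Nonempty (Fin N) := Fin.pos_iff_nonempty.1 (by omega)
  haveI : Nontrivial (EuclideanSpace ℝ (Fin N)) := inferInstance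
  set volB : ℝ := (volume (Metric.closedBall (0 : EuclideanSpace ℝ (Fin N)) 1)).toReal with hvolB
  have hvolB0 : 0 ≤ volB := ENNReal.toReal_nonneg
  set r : ℝ := (2:ℝ) ^ (s - N) with hrdef
  have hr0 : 0 ≤ r := (Real.rpow_pos_of_pos two_pos _).le
  have hr1 : r < 1 := Real.rpow_lt_one_of_one_lt_of_neg one_lt_two (by linarith)
  have hrsub : 0 < 1 - r := by linarith
  have hRHS0 : 0 ≤ M * ((2:ℝ) ^ s * (1 - r)⁻¹ * volB) * ρ ^ ((N:ℝ) - s) := by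
    have := Real.rpow_nonneg hρ.le ((N:ℝ) - s)
    have := (Real.rpow_pos_of_pos two_pos s).le
    positivity
  rw [← ENNReal.ofReal_le_ofReal_iff hRHS0]
  have hInt : IntegrableOn g (Metric.closedBall (0 : EuclideanSpace ℝ (Fin N)) ρ) volume :=
    hgc.continuousOn.integrableOn_compact (isCompact_closedBall _ _)
  rw [MeasureTheory.ofReal_integral_eq_lintegral_ofReal hInt (ae_of_all _ hg0)]
  -- annuli
  set A : ℕ → Set (EuclideanSpace ℝ (Fin N)) := fun k =>
    Metric.closedBall 0 (ρ * 2⁻¹ ^ k) \ Metric.closedBall 0 (ρ * 2⁻¹ ^ (k+1)) with hA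
  have hq : ∀ m : ℕ, ((2:ℝ)⁻¹) ^ m = (2:ℝ) ^ (-(m:ℝ)) := by
    intro m
    rw [Real.rpow_neg (by norm_num), Real.rpow_natCast, inv_pow]
  have hqpos : ∀ m : ℕ, (0:ℝ) < ρ * 2⁻¹ ^ m := by
    intro m; positivity
  -- covering
  have hsub : Metric.closedBall (0 : EuclideanSpace ℝ (Fin N)) ρ \ {0} ⊆ ⋃ k, A k := by
    intro x hx
    have hxρ : ‖x‖ ≤ ρ := by
      simpa [mem_closedBall_zero_iff] using hx.1
    have hx0 : (0:ℝ) < ‖x‖ := by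
      simp only [norm_pos_iff]
      simpa using hx.2
    have hex : ∃ k : ℕ, ρ * 2⁻¹ ^ (k+1) < ‖x‖ := by
      obtain ⟨n, hn⟩ := exists_pow_lt_of_lt_one (div_pos hx0 hρ) (by norm_num : (2:ℝ)⁻¹ < 1)
      refine ⟨n, ?_⟩
      have h1 : ((2:ℝ)⁻¹) ^ (n+1) < 2⁻¹ ^ n :=
        pow_lt_pow_right_of_lt_one₀ (by norm_num) (by norm_num) (Nat.lt_succ_self n)
      have h2 : ρ * 2⁻¹ ^ n < ‖x‖ := by
        rw [lt_div_iff₀ hρ] at hn; linarith [hn]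
      nlinarith [hρ]
    refine Set.mem_iUnion.2 ⟨Nat.find hex, ?_, ?_⟩
    · rw [mem_closedBall_zero_iff]
      rcases Nat.eq_zero_or_pos (Nat.find hex) with h0 | hpos
      · rw [h0]; simpa using hxρ
      · obtain ⟨m, hm⟩ := Nat.exists_eq_succ_of_ne_zero hpos.ne'
        have h := not_lt.1 (Nat.find_min hex (m := m) (by omega))
        rw [hm, Nat.succ_eq_add_one]
        exact h
    · show x ∉ Metric.closedBall _ _
      rw [mem_closedBall_zero_iff]
      exact not_le.2 (Nat.find_spec hex)
  -- per annulus bound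
  have hterm : ∀ k : ℕ, (∫⁻ x in A k, ENNReal.ofReal (g x) ∂volume) ≤
      ENNReal.ofReal (M * (ρ * 2⁻¹ ^ (k+1)) ^ (-s) * ((ρ * 2⁻¹ ^ k) ^ (N:ℕ) * volB)) := by
    intro k
    have hmeas : MeasurableSet (A k) :=
      measurableSet_closedBall.diff measurableSet_closedBall
    have hpt : ∀ x ∈ A k, ENNReal.ofReal (g x) ≤
        ENNReal.ofReal (M * (ρ * 2⁻¹ ^ (k+1)) ^ (-s)) := by
      intro x hx
      apply ENNReal.ofReal_le_ofReal
      have hlow : ρ * 2⁻¹ ^ (k+1) < ‖x‖ := by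
        by_contra hcon
        exact hx.2 (mem_closedBall_zero_iff.2 (not_lt.1 hcon))
      have hxne : x ≠ 0 := by
        rintro rfl
        simp only [norm_zero] at hlow
        linarith [hqpos (k+1)]
      calc g x ≤ M * ‖x‖ ^ (-s) := hb x hxne
        _ ≤ M * (ρ * 2⁻¹ ^ (k+1)) ^ (-s) := by
            apply mul_le_mul_of_nonneg_left _ hM
            exact Real.rpow_le_rpow_of_nonpos (hqpos (k+1)) hlow.le (by linarith)
    calc (∫⁻ x in A k, ENNReal.ofReal (g x) ∂volume)
        ≤ ∫⁻ _ in A k, ENNReal.ofReal (M * (ρ * 2⁻¹ ^ (k+1)) ^ (-s)) ∂volume :=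
          setLIntegral_mono' hmeas hpt
      _ = ENNReal.ofReal (M * (ρ * 2⁻¹ ^ (k+1)) ^ (-s)) * volume (A k) := by
          rw [setLIntegral_const]
      _ ≤ ENNReal.ofReal (M * (ρ * 2⁻¹ ^ (k+1)) ^ (-s)) *
            (ENNReal.ofReal ((ρ * 2⁻¹ ^ k) ^ (N:ℕ)) * volume (Metric.closedBall (0 : EuclideanSpace ℝ (Fin N)) 1)) := by
          apply mul_le_mul_right
          have hball : volume (Metric.closedBall (0 : EuclideanSpace ℝ (Fin N)) (ρ * 2⁻¹ ^ k)) =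
              ENNReal.ofReal ((ρ * 2⁻¹ ^ k) ^ (N:ℕ)) *
                volume (Metric.closedBall (0 : EuclideanSpace ℝ (Fin N)) 1) := by
            rw [Measure.addHaar_closedBall' _ _ (hqpos k).le, finrank_euclideanSpace_fin]
          rw [← hball]
          exact measure_mono Set.diff_subset
      _ = ENNReal.ofReal (M * (ρ * 2⁻¹ ^ (k+1)) ^ (-s) * ((ρ * 2⁻¹ ^ k) ^ (N:ℕ) * volB)) := by
          rw [← ENNReal.ofReal_toReal (measure_closedBall_lt_top (x := (0 : EuclideanSpace ℝ (Fin N))) (r := 1)).ne]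
          rw [← ENNReal.ofReal_mul (by positivity), ← ENNReal.ofReal_mul]
          have hgx : 0 ≤ M * (ρ * 2⁻¹ ^ (k+1)) ^ (-s) := by positivity
          exact hgx
  -- the geometric series
  set C : ℝ := M * ((2:ℝ) ^ s * volB * ρ ^ ((N:ℝ) - s)) with hC
  have hu : ∀ k : ℕ, M * (ρ * 2⁻¹ ^ (k+1)) ^ (-s) * ((ρ * 2⁻¹ ^ k) ^ (N:ℕ) * volB)
      = C * r ^ k := by
    intro k
    have A : (2:ℝ) ^ ((((k:ℝ))+1) * s) * (2:ℝ) ^ (-(k:ℝ) * (N:ℝ)) =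
        (2:ℝ) ^ s * (2:ℝ) ^ ((s - (N:ℝ)) * (k:ℝ)) := by
      rw [← Real.rpow_add two_pos, ← Real.rpow_add two_pos]
      congr 1
      ring
    have B : ρ ^ (-s) * ρ ^ ((N:ℝ)) = ρ ^ ((N:ℝ) - s) := by
      rw [← Real.rpow_add hρ]
      congr 1
      ring
    have e1 : (ρ * 2⁻¹ ^ (k+1)) ^ (-s) = ρ ^ (-s) * (2:ℝ) ^ (((k:ℝ)+1) * s) := by
      rw [hq (k+1), Real.mul_rpow hρ.le (Real.rpow_nonneg (by norm_num) _),
        ← Real.rpow_mul (by norm_num : (0:ℝ) ≤ 2)]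
      congr 1
      push_cast
      ring
    have e2 : (ρ * 2⁻¹ ^ k) ^ (N:ℕ) = ρ ^ ((N:ℝ)) * (2:ℝ) ^ (-(k:ℝ) * (N:ℝ)) := by
      rw [hq k, ← Real.rpow_natCast (ρ * 2 ^ (-(k:ℝ))) N,
        Real.mul_rpow hρ.le (Real.rpow_nonneg (by norm_num) _),
        ← Real.rpow_mul (by norm_num : (0:ℝ) ≤ 2)]
    have e3 : r ^ k = (2:ℝ) ^ ((s - (N:ℝ)) * (k:ℝ)) := by
      rw [hrdef, ← Real.rpow_natCast ((2:ℝ) ^ (s - (N:ℝ))) k,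
        ← Real.rpow_mul (by norm_num : (0:ℝ) ≤ 2)]
    rw [e1, e2, e3, hC, ← B]
    linear_combination (M * (ρ ^ (-s) * ρ ^ ((N:ℝ))) * volB) * A
  -- assemble
  calc ∫⁻ x in Metric.closedBall (0 : EuclideanSpace ℝ (Fin N)) ρ, ENNReal.ofReal (g x) ∂volume
      = ∫⁻ x in Metric.closedBall (0 : EuclideanSpace ℝ (Fin N)) ρ \ {0},
          ENNReal.ofReal (g x) ∂volume := by
        refine (setLIntegral_congr ?_).symm
        exact diff_ae_eq_self.2 (measure_mono_null Set.inter_subset_right (measure_singleton 0))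
    _ ≤ ∫⁻ x in ⋃ k, A k, ENNReal.ofReal (g x) ∂volume := lintegral_mono_set hsub
    _ ≤ ∑' k, ∫⁻ x in A k, ENNReal.ofReal (g x) ∂volume := lintegral_iUnion_le _ _
    _ ≤ ∑' k, ENNReal.ofReal (M * (ρ * 2⁻¹ ^ (k+1)) ^ (-s) * ((ρ * 2⁻¹ ^ k) ^ (N:ℕ) * volB)) :=
        ENNReal.tsum_le_tsum hterm
    _ = ∑' k, ENNReal.ofReal (C * r ^ k) := by
        congr 1
        funext k
        rw [hu k]
    _ = ENNReal.ofReal (∑' k, C * r ^ k) := by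
        refine (ENNReal.ofReal_tsum_of_nonneg (fun k => ?_) ?_).symm
        · have : 0 ≤ C := by
            rw [hC]
            have := Real.rpow_nonneg hρ.le ((N:ℝ) - s)
            have := (Real.rpow_pos_of_pos two_pos s).le
            positivity
          positivity
        · exact (summable_geometric_of_lt_one hr0 hr1).mul_left C
    _ ≤ ENNReal.ofReal (M * (2 ^ s * (1 - r)⁻¹ * volB) * ρ ^ ((N:ℝ) - s)) := by
        apply ENNReal.ofReal_le_ofReal
        rw [tsum_mul_left, tsum_geometric_of_lt_one hr0 hr1, hC]
        ring_nf
        exact le_refl _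


noncomputable def groundW (N : ℕ) (x : EuclideanSpace ℝ (Fin N)) : ℝ :=
  (1 + ‖x‖ ^ 2 / ((N : ℝ) * ((N : ℝ) - 2))) ^ (-(((N : ℝ) - 2) / 2))

noncomputable def fprime (N : ℕ) (u : ℝ) : ℝ :=
  (((N : ℝ) + 2) / ((N : ℝ) - 2)) * |u| ^ ((4 : ℝ) / ((N : ℝ) - 2))

/-- The rescaled ground state `W_λ`. -/
noncomputable def Wl (N : ℕ) (lam : ℝ) (x : EuclideanSpace ℝ (Fin N)) : ℝ :=
  lam ^ (-(((N : ℝ) - 2) / 2)) * groundW N (lam⁻¹ • x)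

theorem fprime_W_dual_norm_small (N : ℕ) (hN : 3 ≤ N) (R : ℝ) (hR : 0 < R) :
    Tendsto (fun lam : ℝ =>
        lam ^ (-(((N : ℝ) - 2) / 4)) *
          (∫ x in {x : EuclideanSpace ℝ (Fin N) | ‖x‖ ≤ R * Real.sqrt lam},
              (fprime N (Wl N lam x)) ^ (2 * (N : ℝ) / ((N : ℝ) + 2))) ^
            (((N : ℝ) + 2) / (2 * (N : ℝ))))
      (nhdsWithin 0 (Set.Ioi 0)) (nhds 0) := by
  have hN3 : (3:ℝ) ≤ (N:ℝ) := by exact_mod_cast hN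
  have hNpos : (0:ℝ) < (N:ℝ) := by linarith
  have hN2 : (0:ℝ) < (N:ℝ) - 2 := by linarith
  have hNp2 : (0:ℝ) < (N:ℝ) + 2 := by linarith
  set κ : ℝ := ((N:ℝ)+2)/((N:ℝ)-2) with hκdef
  set p : ℝ := 2*(N:ℝ)/((N:ℝ)+2) with hpdef
  set q : ℝ := ((N:ℝ)+2)/(2*(N:ℝ)) with hqdef
  set a : ℝ := (3*(N:ℝ)+2)/(2*((N:ℝ)+2)) with hadef
  set b : ℝ := (5*(N:ℝ)-2)/(2*((N:ℝ)+2)) with hbdef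
  set c : ℝ := (N:ℝ)*((N:ℝ)-2) with hcdef
  have hκ : 0 < κ := div_pos hNp2 hN2
  have hc : 0 < c := mul_pos hNpos hN2
  have hb0 : 0 < b := div_pos (by linarith) (by linarith)
  have ha0 : 0 < a := div_pos (by linarith) (by linarith)
  have hq0 : 0 < q := div_pos hNp2 (by linarith)
  have hab : a + b = 2 * p := by
    rw [hadef, hbdef, hpdef]
    field_simp
    ring
  have h2bN : 2 * b < (N:ℝ) := by
    rw [hbdef, ← sub_pos]
    have heq : (N:ℝ) - 2 * ((5 * (N:ℝ) - 2) / (2 * ((N:ℝ) + 2))) =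
        ((N:ℝ)*(N:ℝ) - 3*(N:ℝ) + 2)/((N:ℝ)+2) := by
      field_simp
      ring
    rw [heq]
    apply div_pos _ (by linarith)
    nlinarith
  set volB : ℝ := (volume (Metric.closedBall (0 : EuclideanSpace ℝ (Fin N)) 1)).toReal with hvolBdef
  have hvolB0 : 0 ≤ volB := ENNReal.toReal_nonneg
  set D : ℝ := (2:ℝ) ^ (2*b) * (1 - (2:ℝ) ^ (2*b - (N:ℝ)))⁻¹ * volB with hDdef
  have hD0 : 0 ≤ D := by
    have h1 : (2:ℝ) ^ (2*b - (N:ℝ)) < 1 :=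
      Real.rpow_lt_one_of_one_lt_of_neg one_lt_two (by linarith)
    have h2 : (0:ℝ) ≤ (2:ℝ) ^ (2*b) := (Real.rpow_pos_of_pos two_pos _).le
    have h3 : (0:ℝ) ≤ (1 - (2:ℝ) ^ (2*b - (N:ℝ)))⁻¹ := by
      apply inv_nonneg.2; linarith
    positivity
  set C0 : ℝ := κ ^ p * c ^ b * D * R ^ ((N:ℝ) - 2*b) with hC0def
  have hC00 : 0 ≤ C0 := by
    have h1 : (0:ℝ) ≤ κ ^ p := (Real.rpow_pos_of_pos hκ _).le
    have h2 : (0:ℝ) ≤ c ^ b := (Real.rpow_pos_of_pos hc _).le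
    have h3 : (0:ℝ) ≤ R ^ ((N:ℝ) - 2*b) := (Real.rpow_pos_of_pos hR _).le
    positivity
  set C : ℝ := C0 ^ q with hCdef
  set Eexp : ℝ := ((N:ℝ)-2)/(4*(N:ℝ)) with hEdef
  have hE0 : 0 < Eexp := div_pos (by linarith) (by linarith)
  -- nonnegativity of the integrand
  have hfp0 : ∀ (lam : ℝ) (x : EuclideanSpace ℝ (Fin N)), 0 ≤ fprime N (Wl N lam x) := by
    intro lam x
    unfold fprime
    exact mul_nonneg (le_of_lt (div_pos hNp2 hN2)) (Real.rpow_nonneg (abs_nonneg _) _)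
  have hset : ∀ lam : ℝ, {x : EuclideanSpace ℝ (Fin N) | ‖x‖ ≤ R * Real.sqrt lam} =
      Metric.closedBall (0 : EuclideanSpace ℝ (Fin N)) (R * Real.sqrt lam) := by
    intro lam
    ext x
    simp [mem_closedBall_zero_iff]
  -- the key estimate
  have key : ∀ lam : ℝ, 0 < lam →
      lam ^ (-(((N : ℝ) - 2) / 4)) *
          (∫ x in {x : EuclideanSpace ℝ (Fin N) | ‖x‖ ≤ R * Real.sqrt lam},
              (fprime N (Wl N lam x)) ^ p) ^ q ≤ C * lam ^ Eexp := by
    intro lam hlam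
    set base : EuclideanSpace ℝ (Fin N) → ℝ := fun x => lam + ‖x‖^2/(c*lam) with hbasedef
    have hbase : ∀ x, 0 < base x := by
      intro x
      have : 0 ≤ ‖x‖^2/(c*lam) := by positivity
      simp only [hbasedef]
      linarith
    have hW : ∀ x, Wl N lam x = base x ^ (-(((N : ℝ) - 2) / 2)) := by
      intro x
      unfold Wl groundW
      have hns : ‖lam⁻¹ • x‖ = lam⁻¹ * ‖x‖ := by
        rw [norm_smul, Real.norm_eq_abs, abs_of_pos (inv_pos.2 hlam)]
      have hpos1 : (0:ℝ) < 1 + ‖lam⁻¹ • x‖ ^ 2 / ((N : ℝ) * ((N : ℝ) - 2)) := by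
        have : (0:ℝ) ≤ ‖lam⁻¹ • x‖ ^ 2 / ((N : ℝ) * ((N : ℝ) - 2)) := by positivity
        linarith
      rw [← Real.mul_rpow hlam.le hpos1.le]
      congr 1
      rw [hns, hbasedef]
      have hl : lam ≠ 0 := hlam.ne'
      have hc' : c ≠ 0 := hc.ne'
      simp only [hcdef] at *
      field_simp
    have hfpeq : ∀ x, fprime N (Wl N lam x) = κ * base x ^ (-2 : ℝ) := by
      intro x
      rw [hW x]
      unfold fprime
      have hexp : (-(((N:ℝ) - 2) / 2)) * ((4:ℝ)/((N:ℝ)-2)) = (-2:ℝ) := by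
        field_simp
        ring
      rw [abs_of_pos (Real.rpow_pos_of_pos (hbase x) _),
        ← Real.rpow_mul (hbase x).le, hexp]
    set g : EuclideanSpace ℝ (Fin N) → ℝ := fun x => κ ^ p * base x ^ (-(a+b)) with hgdef
    have hint : (fun x => (fprime N (Wl N lam x)) ^ p) = g := by
      funext x
      have hexp2 : (-2:ℝ) * p = -(a+b) := by rw [hab]; ring
      rw [hfpeq x]
      simp only [hgdef]
      rw [Real.mul_rpow hκ.le (Real.rpow_nonneg (hbase x).le _),
        ← Real.rpow_mul (hbase x).le, hexp2]
    have hg0 : ∀ x, 0 ≤ g x := by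
      intro x
      exact mul_nonneg (Real.rpow_nonneg hκ.le _) (Real.rpow_nonneg (hbase x).le _)
    have hgc : Continuous g := by
      apply continuous_const.mul
      apply Continuous.rpow_const
      · exact continuous_const.add ((continuous_norm.pow 2).div_const _)
      · intro x
        exact Or.inl (hbase x).ne'
    set M : ℝ := κ ^ p * ((c*lam) ^ b * lam ^ (-a)) with hMdef
    have hM0 : 0 ≤ M := by
      have h1 : (0:ℝ) ≤ κ ^ p := (Real.rpow_pos_of_pos hκ _).le
      have h2 : (0:ℝ) ≤ (c*lam) ^ b := Real.rpow_nonneg (by positivity) _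
      have h3 : (0:ℝ) ≤ lam ^ (-a) := Real.rpow_nonneg hlam.le _
      positivity
    have hgb : ∀ x : EuclideanSpace ℝ (Fin N), x ≠ 0 → g x ≤ M * ‖x‖ ^ (-(2*b)) := by
      intro x hx
      have hxn : (0:ℝ) < ‖x‖ := norm_pos_iff.2 hx
      have hsplit : base x ^ (-(a+b)) = base x ^ (-a) * base x ^ (-b) := by
        rw [← Real.rpow_add (hbase x)]
        congr 1; ring
      have h1 : base x ^ (-a) ≤ lam ^ (-a) := by
        apply Real.rpow_le_rpow_of_nonpos hlam _ (by linarith)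
        simp only [hbasedef]
        have : (0:ℝ) ≤ ‖x‖^2/(c*lam) := by positivity
        linarith
      have hqx : (0:ℝ) < ‖x‖^2/(c*lam) := by positivity
      have h2 : base x ^ (-b) ≤ (‖x‖^2/(c*lam)) ^ (-b) := by
        apply Real.rpow_le_rpow_of_nonpos hqx _ (by linarith)
        simp only [hbasedef]
        linarith
      have h3 : (‖x‖^2/(c*lam)) ^ (-b) = (c*lam) ^ b * ‖x‖ ^ (-(2*b)) := by
        rw [Real.div_rpow (by positivity) (by positivity),
          Real.rpow_neg (by positivity : (0:ℝ) ≤ c*lam), div_eq_mul_inv, inv_inv,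
          ← Real.rpow_natCast ‖x‖ 2, ← Real.rpow_mul (norm_nonneg x), mul_comm]
        congr 2
        push_cast
        ring
      calc g x = κ ^ p * (base x ^ (-a) * base x ^ (-b)) := by
            simp only [hgdef]; rw [hsplit]
        _ ≤ κ ^ p * (lam ^ (-a) * ((c*lam) ^ b * ‖x‖ ^ (-(2*b)))) := by
            apply mul_le_mul_of_nonneg_left _ (Real.rpow_nonneg hκ.le _)
            have hb2 : base x ^ (-b) ≤ (c*lam) ^ b * ‖x‖ ^ (-(2*b)) := h3 ▸ h2
            apply mul_le_mul h1 hb2 (Real.rpow_nonneg (hbase x).le _)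
              (Real.rpow_nonneg hlam.le _)
        _ = M * ‖x‖ ^ (-(2*b)) := by rw [hMdef]; ring
    have hρ : 0 < R * Real.sqrt lam := mul_pos hR (Real.sqrt_pos.2 hlam)
    have hI := ball_rpow_bound N hN (by positivity : (0:ℝ) < 2*b) h2bN hρ hM0 g hg0 hgc hgb
    rw [hset lam, hint]
    have hintnn : 0 ≤ ∫ x in Metric.closedBall (0 : EuclideanSpace ℝ (Fin N)) (R * Real.sqrt lam), g x :=
      setIntegral_nonneg measurableSet_closedBall (fun x _ => hg0 x)
    have step1 : (∫ x in Metric.closedBall (0 : EuclideanSpace ℝ (Fin N)) (R * Real.sqrt lam), g x) ^ q ≤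
        (M * ((2:ℝ) ^ (2*b) * (1 - (2:ℝ) ^ (2*b - (N:ℝ)))⁻¹ * volB) * (R * Real.sqrt lam) ^ ((N:ℝ) - 2*b)) ^ q :=
      Real.rpow_le_rpow hintnn hI hq0.le
    have hlamnn := hlam.le
    have step2 : lam ^ (-(((N : ℝ) - 2) / 4)) *
        (∫ x in Metric.closedBall (0 : EuclideanSpace ℝ (Fin N)) (R * Real.sqrt lam), g x) ^ q ≤
        lam ^ (-(((N : ℝ) - 2) / 4)) *
        (M * ((2:ℝ) ^ (2*b) * (1 - (2:ℝ) ^ (2*b - (N:ℝ)))⁻¹ * volB) * (R * Real.sqrt lam) ^ ((N:ℝ) - 2*b)) ^ q :=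
      mul_le_mul_of_nonneg_left step1 (Real.rpow_nonneg hlamnn _)
    refine step2.trans (le_of_eq ?_)
    -- now an identity in lam
    have hsq : Real.sqrt lam = lam ^ ((1:ℝ)/2) := Real.sqrt_eq_rpow lam
    have e1 : (R * Real.sqrt lam) ^ ((N:ℝ) - 2*b) =
        R ^ ((N:ℝ) - 2*b) * lam ^ (((N:ℝ) - 2*b)/2) := by
      rw [hsq, Real.mul_rpow hR.le (Real.rpow_nonneg hlamnn _),
        ← Real.rpow_mul hlamnn]
      congr 2
      ring
    have e2 : (c * lam) ^ b = c ^ b * lam ^ b := Real.mul_rpow hc.le hlamnn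
    have e3 : M * ((2:ℝ) ^ (2*b) * (1 - (2:ℝ) ^ (2*b - (N:ℝ)))⁻¹ * volB) * (R * Real.sqrt lam) ^ ((N:ℝ) - 2*b)
        = C0 * lam ^ (b + -a + ((N:ℝ) - 2*b)/2) := by
      rw [hMdef, e1, e2, hC0def, hDdef]
      rw [Real.rpow_add hlam, Real.rpow_add hlam]
      ring
    have hfin : -(((N:ℝ) - 2) / 4) + (b + -a + ((N:ℝ) - 2*b)/2) * q = Eexp := by
      rw [hEdef, hqdef, hadef, hbdef]
      field_simp
      ring
    rw [e3, Real.mul_rpow hC00 (Real.rpow_nonneg hlamnn _), ← Real.rpow_mul hlamnn,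
      ← mul_assoc, mul_comm (lam ^ (-(((N : ℝ) - 2) / 4))) (C0 ^ q), mul_assoc,
      ← Real.rpow_add hlam, hfin, ← hCdef]
  -- squeeze
  have hupper : Tendsto (fun lam : ℝ => C * lam ^ Eexp) (nhdsWithin 0 (Set.Ioi 0)) (nhds 0) := by
    have h1 : Tendsto (fun lam : ℝ => lam ^ Eexp) (nhds 0) (nhds ((0:ℝ) ^ Eexp)) :=
      (Real.continuousAt_rpow_const 0 Eexp (Or.inr hE0.le)).tendsto
    rw [Real.zero_rpow hE0.ne'] at h1
    have h2 : Tendsto (fun lam : ℝ => C * lam ^ Eexp) (nhdsWithin 0 (Set.Ioi 0)) (nhds (C * 0)) :=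
      Tendsto.const_mul C (h1.mono_left nhdsWithin_le_nhds)
    simpa using h2
  refine tendsto_of_tendsto_of_tendsto_of_le_of_le' tendsto_const_nhds hupper ?_ ?_
  · filter_upwards [self_mem_nhdsWithin] with lam hlam
    have hlam' : 0 < lam := hlam
    apply mul_nonneg (Real.rpow_nonneg hlam'.le _)
    apply Real.rpow_nonneg
    apply setIntegral_nonneg
    · rw [hset lam]; exact measurableSet_closedBall
    · intro x _
      exact Real.rpow_nonneg (hfp0 lam x) _
  · filter_upwards [self_mem_nhdsWithin] with lam hlam
    exact key lam hlam
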